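/- For every unsatisfiable CNF formula α, the minimum size of a tree-like resolution refutation of α equals the minimum size of a decision-tree (DLL) refutation of α (i.e., tree-like resolution and DLL are equally strong proof systems). -/

import Mathlib

/-- A variable is a natural number. -/
abbrev Var : Type := ℕ

/-- A literal is a pair of a variable and a Boolean. -/
abbrev Lit : Type := Var × Bool

/-- A clause is a finite set of literals. -/
abbrev Clause : Type := Finset Lit

/-- A CNF formula is a finite set of clauses. -/
abbrev CNF : Type := Finset Clause

/-- A partial assignment. -/
abbrev PAssign : Type := Var → Option Bool

/-- A clause is falsified by a partial assignment if all its literals are false under it. -/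
def Falsified (ρ : PAssign) (C : Clause) : Prop :=
  ∀ l ∈ C, ρ l.1 = some (!l.2)

/-- Extend a partial assignment by `v := b`. -/
def extendP (ρ : PAssign) (v : Var) (b : Bool) : PAssign :=
  fun w => if w = v then some b else ρ w

/-- Binary decision trees: leaves labeled by clauses, internal nodes labeled by a
variable, with `t0` the `v := false` child and `t1` the `v := true` child. -/
inductive DTree : Type where
  | leaf (C : Clause)
  | node (v : Var) (t0 t1 : DTree)

/-- Size of a decision tree: the number of internal nodes (decisions). -/
def DTree.size : DTree → ℕ
  | .leaf _ => 0
  | .node _ t0 t1 => t0.size + t1.size + 1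

/-- Correctness of a decision-tree (DLL) refutation of `α`, relative to the partial
assignment `ρ` accumulated along the path from the root: no variable occurs twice on
a path, and every leaf is labeled by a clause of `α` falsified by its path assignment. -/
def DLLOk (α : CNF) : PAssign → DTree → Prop
  | ρ, .leaf C => C ∈ α ∧ Falsified ρ C
  | ρ, .node v t0 t1 =>
      ρ v = none ∧ DLLOk α (extendP ρ v false) t0 ∧ DLLOk α (extendP ρ v true) t1

/-- A decision-tree (DLL) refutation of `α`. -/
def IsDLLRefutation (α : CNF) (t : DTree) : Prop :=
  DLLOk α (fun _ => none) t

/-- Resolution trees: leaves labeled by clauses, internal nodes labeled by a clause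
and a pivot variable, `t1` being the child whose clause contains `(v, true)` and
`t2` the child whose clause contains `(v, false)`. -/
inductive RTree : Type where
  | leaf (C : Clause)
  | node (C : Clause) (v : Var) (t1 t2 : RTree)

/-- The clause labeling the root of a resolution tree. -/
def RTree.clause : RTree → Clause
  | .leaf C => C
  | .node C _ _ _ => C

/-- Size of a resolution tree: the number of internal nodes. -/
def RTree.size : RTree → ℕ
  | .leaf _ => 0
  | .node _ _ t1 t2 => t1.size + t2.size + 1

/-- Correctness of a tree-like resolution derivation from `α`: every leaf is a clause
of `α` and every internal node is the resolvent of its two children on its pivot. -/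
def ResOk (α : CNF) : RTree → Prop
  | .leaf C => C ∈ α
  | .node C v t1 t2 =>
      ResOk α t1 ∧ ResOk α t2 ∧
      (v, true) ∈ t1.clause ∧ (v, false) ∈ t2.clause ∧
      C = t1.clause.erase (v, true) ∪ t2.clause.erase (v, false)

/-- A tree-like resolution refutation of `α`: a correct derivation of the empty clause. -/
def IsTLRRefutation (α : CNF) (t : RTree) : Prop :=
  ResOk α t ∧ t.clause = ∅

/-- A total assignment satisfies a CNF formula if every clause contains a true literal. -/
def Satisfies (τ : Var → Bool) (α : CNF) : Prop :=
  ∀ C ∈ α, ∃ l ∈ C, τ l.1 = l.2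

/-- A CNF formula is unsatisfiable if no total assignment satisfies it. -/
def Unsat (α : CNF) : Prop :=
  ∀ τ : Var → Bool, ¬ Satisfies τ α

/-- Every root-to-leaf path of the tree assigns every variable of `V`. -/
def AssignsAll (V : Finset Var) : PAssign → DTree → Prop
  | ρ, .leaf _ => ∀ v ∈ V, ρ v ≠ none
  | ρ, .node v t0 t1 =>
      AssignsAll V (extendP ρ v false) t0 ∧ AssignsAll V (extendP ρ v true) t1

/-- A total-enumeration (TAE) refutation of `α` over `V`: a decision-tree refutation
in which every root-to-leaf path assigns every variable of `V`. -/
def IsTAERefutation (α : CNF) (V : Finset Var) (t : DTree) : Prop :=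
  IsDLLRefutation α t ∧ AssignsAll V (fun _ => none) t

/-- `C` is a unit clause under `ρ` with unassigned literal `(v, b)`: exactly one
literal of `C` is unassigned and all other literals of `C` are false under `ρ`. -/
def UnitClause (ρ : PAssign) (C : Clause) (v : Var) (b : Bool) : Prop :=
  (v, b) ∈ C ∧ ρ v = none ∧ ∀ l ∈ C, l ≠ (v, b) → ρ l.1 = some (!l.2)

/-- BCP-compliance of a decision tree: at every internal node whose path assignment
makes some clause of `α` unit, the node is labeled by the variable `v` of the
unassigned literal `(v, b)` of some unit clause `C` of `α`, and the child along the
edge `v := ¬b` is a leaf labeled by `C`. -/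
def BCPOk (α : CNF) : PAssign → DTree → Prop
  | _, .leaf _ => True
  | ρ, .node v t0 t1 =>
      ((∃ C ∈ α, ∃ w b, UnitClause ρ C w b) →
        ∃ C ∈ α, ∃ b, UnitClause ρ C v b ∧
          cond b (t0 = DTree.leaf C) (t1 = DTree.leaf C)) ∧
      BCPOk α (extendP ρ v false) t0 ∧ BCPOk α (extendP ρ v true) t1

/-- A BCP-compliant decision-tree refutation of `α`. -/
def IsBCPRefutation (α : CNF) (t : DTree) : Prop :=
  IsDLLRefutation α t ∧ BCPOk α (fun _ => none) t

/-- The variables of `α` all lie in `V`. -/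
def VarsIn (α : CNF) (V : Finset Var) : Prop :=
  ∀ C ∈ α, ∀ l ∈ C, l.1 ∈ V

/-- The fresh chain variable `lᵢᵖ` for the literal `p = (x, s)` over `a, b, c`
(encoded as variables `0, 1, 2`); injective for `x < 3`, `i ≥ 1`, and disjoint
from `{0, 1, 2}`. -/
def chainVar (x : Var) (s : Bool) (i : ℕ) : Var :=
  3 + (x + 3 * cond s 1 0) + 6 * i

/-- The eight width-3 clauses over the variables `a = 0`, `b = 1`, `c = 2`:
all possible disjunctions of literals of `a`, `b`, `c`. -/
def signClauses : Finset Clause :=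
  (Finset.univ : Finset (Bool × Bool × Bool)).image
    (fun ε => ({(0, ε.1), (1, ε.2.1), (2, ε.2.2)} : Clause))

/-- For each of the six literals `p = (x, s)` over `a, b, c`, the chain clauses
`{p, l₁ᵖ}` and `{¬lᵢᵖ, l₍ᵢ₊₁₎ᵖ}` for `1 ≤ i ≤ k - 1`. -/
def chainClauses (k : ℕ) : Finset Clause :=
  ((Finset.range 3) ×ˢ (Finset.univ : Finset Bool)).biUnion fun q =>
    insert ({(q.1, q.2), (chainVar q.1 q.2 1, true)} : Clause)
      ((Finset.Icc 1 (k - 1)).image fun i =>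
        ({(chainVar q.1 q.2 i, false), (chainVar q.1 q.2 (i + 1), true)} : Clause))

/-- The formula `F_k` separating DLL from DLL + BCP. -/
def Fk (k : ℕ) : CNF := signClauses ∪ chainClauses k

lemma falsified_extend_aux {ρ : PAssign} {D : Clause} {v : Var} {b : Bool}
    (hf : Falsified (extendP ρ v b) D) {l : Lit} (hl : l ∈ D) (hne : l ≠ (v, !b)) :
    ρ l.1 = some (!l.2) := by
  have h := hf l hl
  unfold extendP at h
  by_cases hv : l.1 = v
  · exfalso
    rw [if_pos hv] at h
    have hb : b = !l.2 := Option.some.inj h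
    apply hne
    have : l.2 = !b := by rw [hb]; simp
    exact Prod.ext hv this
  · rwa [if_neg hv] at h

lemma falsified_extend_of {ρ : PAssign} {D : Clause} {v : Var} {b : Bool}
    (hv : ρ v = none)
    (hf : ∀ l ∈ D, l ≠ (v, !b) → ρ l.1 = some (!l.2)) :
    Falsified (extendP ρ v b) D := by
  intro l hl
  unfold extendP
  by_cases hvl : l.1 = v
  · rw [if_pos hvl]
    by_cases hne : l = (v, !b)
    · rw [hne]; simp
    · exfalso
      have := hf l hl hne
      rw [hvl, hv] at this
      exact absurd this (by simp)
  · rw [if_neg hvl]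
    by_cases hne : l = (v, !b)
    · exfalso; apply hvl; rw [hne]
    · exact hf l hl hne

lemma dll_to_tlr (α : CNF) : ∀ t : DTree, ∀ ρ : PAssign, DLLOk α ρ t →
    ∃ r : RTree, ResOk α r ∧ Falsified ρ r.clause ∧ r.size ≤ t.size := by
  intro t
  induction t with
  | leaf C => intro ρ h; exact ⟨.leaf C, h.1, h.2, le_refl _⟩
  | node v t0 t1 ih0 ih1 =>
    intro ρ h
    obtain ⟨hv, h0, h1⟩ := h
    obtain ⟨r0, hr0, hf0, hs0⟩ := ih0 _ h0
    obtain ⟨r1, hr1, hf1, hs1⟩ := ih1 _ h1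
    by_cases hm0 : (v, true) ∈ r0.clause
    · by_cases hm1 : (v, false) ∈ r1.clause
      · refine ⟨.node _ v r0 r1, ⟨hr0, hr1, hm0, hm1, rfl⟩, ?_, ?_⟩
        · intro l hl
          rcases Finset.mem_union.1 hl with h' | h'
          · exact falsified_extend_aux hf0 (Finset.mem_of_mem_erase h')
              (Finset.ne_of_mem_erase h')
          · exact falsified_extend_aux (b := true) hf1 (Finset.mem_of_mem_erase h')
              (Finset.ne_of_mem_erase h')
        · simp only [RTree.size, DTree.size]; omega
      · refine ⟨r1, hr1, ?_, ?_⟩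
        · intro l hl
          exact falsified_extend_aux (b := true) hf1 hl (fun he => hm1 (he ▸ hl))
        · simp only [DTree.size]; omega
    · refine ⟨r0, hr0, ?_, ?_⟩
      · intro l hl
        exact falsified_extend_aux hf0 hl (fun he => hm0 (he ▸ hl))
      · simp only [DTree.size]; omega

lemma tlr_to_dll (α : CNF) : ∀ r : RTree, ∀ ρ : PAssign, ResOk α r →
    Falsified ρ r.clause → ∃ t : DTree, DLLOk α ρ t ∧ t.size ≤ r.size := by
  intro r
  induction r with
  | leaf C => intro ρ h hf; exact ⟨.leaf C, ⟨h, hf⟩, le_refl _⟩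
  | node C v r1 r2 ih1 ih2 =>
    intro ρ h hf
    obtain ⟨hr1, hr2, hm1, hm2, hC⟩ := h
    have hC1 : ∀ l ∈ r1.clause, l ≠ (v, true) → ρ l.1 = some (!l.2) := by
      intro l hl hne
      exact hf l (hC ▸ Finset.mem_union_left _ (Finset.mem_erase.2 ⟨hne, hl⟩))
    have hC2 : ∀ l ∈ r2.clause, l ≠ (v, false) → ρ l.1 = some (!l.2) := by
      intro l hl hne
      exact hf l (hC ▸ Finset.mem_union_right _ (Finset.mem_erase.2 ⟨hne, hl⟩))
    rcases hv : ρ v with _ | b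
    · obtain ⟨t0, ht0, hs0⟩ := ih1 (extendP ρ v false) hr1
        (falsified_extend_of hv (by simpa using hC1))
      obtain ⟨t1, ht1, hs1⟩ := ih2 (extendP ρ v true) hr2
        (falsified_extend_of hv (by simpa using hC2))
      refine ⟨.node v t0 t1, ⟨hv, ht0, ht1⟩, ?_⟩
      simp only [DTree.size, RTree.size]; omega
    · rcases b with _ | _
      · have hfa : Falsified ρ r1.clause := by
          intro l hl
          by_cases hne : l = (v, true)
          · simp [hne, hv]
          · exact hC1 l hl hne
        obtain ⟨t, ht, hs⟩ := ih1 ρ hr1 hfa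
        exact ⟨t, ht, by simp only [RTree.size]; omega⟩
      · have hfa : Falsified ρ r2.clause := by
          intro l hl
          by_cases hne : l = (v, false)
          · simp [hne, hv]
          · exact hC2 l hl hne
        obtain ⟨t, ht, hs⟩ := ih2 ρ hr2 hfa
        exact ⟨t, ht, by simp only [RTree.size]; omega⟩

lemma empty_falsified_eq_empty {C : Clause}
    (h : Falsified (fun _ => none) C) : C = ∅ := by
  refine Finset.eq_empty_iff_forall_notMem.2 fun l hl => ?_
  exact absurd (h l hl) (by simp)

/-- For every unsatisfiable CNF formula `α`, the minimum size of a
tree-like resolution refutation of `α` equals the minimum size of a decision-tree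
(DLL) refutation of `α`. -/
theorem tlr_equals_dll (α : CNF) (h : Unsat α) :
    sInf {k : ℕ | ∃ r : RTree, IsTLRRefutation α r ∧ r.size = k}
      = sInf {k : ℕ | ∃ t : DTree, IsDLLRefutation α t ∧ t.size = k} := by
  set S := {k : ℕ | ∃ r : RTree, IsTLRRefutation α r ∧ r.size = k} with hS
  set T := {k : ℕ | ∃ t : DTree, IsDLLRefutation α t ∧ t.size = k} with hT
  have hST : ∀ k ∈ S, ∃ j ∈ T, j ≤ k := by
    rintro k ⟨r, ⟨hr, hre⟩, rfl⟩
    obtain ⟨t, ht, hs⟩ := tlr_to_dll α r (fun _ => none) hr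
      (by rw [hre]; intro l hl; exact absurd hl (Finset.notMem_empty l))
    exact ⟨t.size, ⟨t, ht, rfl⟩, hs⟩
  have hTS : ∀ k ∈ T, ∃ j ∈ S, j ≤ k := by
    rintro k ⟨t, ht, rfl⟩
    obtain ⟨r, hr, hf, hs⟩ := dll_to_tlr α t (fun _ => none) ht
    exact ⟨r.size, ⟨r, ⟨hr, empty_falsified_eq_empty hf⟩, rfl⟩, hs⟩
  by_cases hTne : T.Nonempty
  · obtain ⟨j, hj, hjle⟩ := hTS _ (Nat.sInf_mem hTne)
    have hSne : S.Nonempty := ⟨j, hj⟩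
    obtain ⟨i, hi, hile⟩ := hST _ (Nat.sInf_mem hSne)
    exact le_antisymm (le_trans (Nat.sInf_le hj) hjle) (le_trans (Nat.sInf_le hi) hile)
  · have hSe : S = ∅ := by
      refine Set.eq_empty_iff_forall_notMem.2 fun k hk => ?_
      obtain ⟨j, hj, _⟩ := hST _ hk
      exact hTne ⟨j, hj⟩
    rw [hSe, Set.not_nonempty_iff_eq_empty.1 hTne]
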